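/- If λ is a limit ordinal, then for every ordinal α one has ⨁_{i<λ} α = α·λ, where ⨁_{i<λ} α is the λ-fold iterated Hessenberg sum of α and · is ordinal multiplication. -/

import Mathlib

namespace Ordinal

universe u

/-- Natural (Hessenberg) addition of ordinals, as defined in Mathlib (Dec 2024),
which no longer provides it. -/
noncomputable def nadd (a b : Ordinal.{u}) : Ordinal.{u} :=
  max (⨆ x : Set.Iio a, Order.succ (nadd x.1 b)) (⨆ x : Set.Iio b, Order.succ (nadd a x.1))
termination_by (a, b)
decreasing_by
  · exact Prod.Lex.left _ _ x.2
  · exact Prod.Lex.right _ x.2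

end Ordinal

/-- The `β`-fold iterated Hessenberg (natural) sum of `α`:
`⨁_{i<0} α = 0`, `⨁_{i<β+1} α = (⨁_{i<β} α) ⊕ α`, and
`⨁_{i<λ} α = sup_{β<λ} ⨁_{i<β} α` for `λ` a limit ordinal. -/
noncomputable def iterNadd (α β : Ordinal) : Ordinal :=
  Ordinal.limitRecOn β 0 (fun _ ih => Ordinal.nadd ih α)
    (fun b _ ih => ⨆ γ : Set.Iio b, ih γ.1 γ.2)


local infixl:65 " ♯ " => Ordinal.nadd

namespace Ordinal

theorem nadd_le_iff {a b c : Ordinal} :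
    b ♯ c ≤ a ↔ (∀ b' < b, b' ♯ c < a) ∧ ∀ c' < c, b ♯ c' < a := by
  rw [nadd.eq_1 b c, max_le_iff, Ordinal.iSup_le_iff, Ordinal.iSup_le_iff]
  simp only [Order.succ_le_iff, Subtype.forall, Set.mem_Iio]

theorem lt_nadd_iff {a b c : Ordinal} :
    a < b ♯ c ↔ (∃ b' < b, a ≤ b' ♯ c) ∨ ∃ c' < c, a ≤ b ♯ c' := by
  rw [← not_le, nadd_le_iff]
  simp only [not_and_or, not_forall, not_lt, exists_prop]

theorem nadd_lt_nadd_right {b c : Ordinal} (h : b < c) (a : Ordinal) : b ♯ a < c ♯ a :=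
  lt_nadd_iff.2 (Or.inl ⟨b, h, le_rfl⟩)

theorem nadd_lt_nadd_left {b c : Ordinal} (h : b < c) (a : Ordinal) : a ♯ b < a ♯ c :=
  lt_nadd_iff.2 (Or.inr ⟨b, h, le_rfl⟩)

theorem nadd_le_nadd_left {b c : Ordinal} (h : b ≤ c) (a : Ordinal) : a ♯ b ≤ a ♯ c := by
  rcases h.lt_or_eq with h | rfl
  · exact (nadd_lt_nadd_left h a).le
  · exact le_rfl

theorem nadd_le_nadd_right {b c : Ordinal} (h : b ≤ c) (a : Ordinal) : b ♯ a ≤ c ♯ a := by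
  rcases h.lt_or_eq with h | rfl
  · exact (nadd_lt_nadd_right h a).le
  · exact le_rfl

@[simp]
theorem nadd_zero (a : Ordinal) : a ♯ 0 = a := by
  induction a using Ordinal.induction with
  | _ a IH =>
    apply le_antisymm
    · rw [nadd_le_iff]
      refine ⟨fun a' ha' => by rw [IH a' ha']; exact ha',
        fun c' hc' => absurd hc' (not_lt_of_ge zero_le)⟩
    · apply le_of_forall_lt
      intro a' ha'
      exact lt_nadd_iff.2 (Or.inl ⟨a', ha', (IH a' ha').ge⟩)

theorem nadd_comm (a b : Ordinal) : a ♯ b = b ♯ a := by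
  induction a using Ordinal.induction generalizing b with
  | _ a IHa =>
    induction b using Ordinal.induction with
    | _ b IHb =>
      apply le_antisymm
      · rw [nadd_le_iff]
        refine ⟨fun a' ha' => ?_, fun b' hb' => ?_⟩
        · rw [IHa a' ha']; exact nadd_lt_nadd_left ha' b
        · rw [IHb b' hb']; exact nadd_lt_nadd_right hb' a
      · rw [nadd_le_iff]
        refine ⟨fun b' hb' => ?_, fun a' ha' => ?_⟩
        · rw [← IHb b' hb']; exact nadd_lt_nadd_left hb' a
        · rw [← IHa a' ha']; exact nadd_lt_nadd_right ha' b

@[simp]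
theorem zero_nadd (a : Ordinal) : 0 ♯ a = a := by
  rw [nadd_comm, nadd_zero]

theorem nadd_assoc (a b c : Ordinal) : a ♯ b ♯ c = a ♯ (b ♯ c) := by
  induction a using Ordinal.induction generalizing b c with
  | _ a IHa =>
  induction b using Ordinal.induction generalizing c with
  | _ b IHb =>
  induction c using Ordinal.induction with
  | _ c IHc =>
  apply le_antisymm
  · rw [nadd_le_iff]
    refine ⟨fun d hd => ?_, fun c' hc' => ?_⟩
    · rcases lt_nadd_iff.1 hd with ⟨a', ha', hd'⟩ | ⟨b', hb', hd'⟩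
      · calc d ♯ c ≤ a' ♯ b ♯ c := nadd_le_nadd_right hd' c
          _ = a' ♯ (b ♯ c) := IHa a' ha' b c
          _ < a ♯ (b ♯ c) := nadd_lt_nadd_right ha' _
      · calc d ♯ c ≤ a ♯ b' ♯ c := nadd_le_nadd_right hd' c
          _ = a ♯ (b' ♯ c) := IHb b' hb' c
          _ < a ♯ (b ♯ c) := nadd_lt_nadd_left (nadd_lt_nadd_right hb' c) a
    · rw [IHc c' hc']; exact nadd_lt_nadd_left (nadd_lt_nadd_left hc' b) a
  · rw [nadd_le_iff]
    refine ⟨fun a' ha' => ?_, fun e he => ?_⟩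
    · rw [← IHa a' ha']; exact nadd_lt_nadd_right (nadd_lt_nadd_right ha' b) c
    · rcases lt_nadd_iff.1 he with ⟨b', hb', he'⟩ | ⟨c', hc', he'⟩
      · calc a ♯ e ≤ a ♯ (b' ♯ c) := nadd_le_nadd_left he' a
          _ = a ♯ b' ♯ c := (IHb b' hb' c).symm
          _ < a ♯ b ♯ c := nadd_lt_nadd_right (nadd_lt_nadd_left hb' a) c
      · calc a ♯ e ≤ a ♯ (b ♯ c') := nadd_le_nadd_left he' a
          _ = a ♯ b ♯ c' := (IHc c' hc').symm
          _ < a ♯ b ♯ c := nadd_lt_nadd_left hc' _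

theorem nadd_right_comm (a b c : Ordinal) : a ♯ b ♯ c = a ♯ c ♯ b := by
  rw [nadd_assoc, nadd_comm b, ← nadd_assoc]

theorem add_le_nadd (a b : Ordinal) : a + b ≤ a ♯ b := by
  induction b using Ordinal.induction with
  | _ b IH =>
    apply le_of_forall_lt
    intro x hx
    rcases lt_or_ge x a with h | h
    · calc x < a := h
        _ = a ♯ 0 := (nadd_zero a).symm
        _ ≤ a ♯ b := nadd_le_nadd_left zero_le a
    · have hb : b ≠ 0 := by
        rintro rfl
        rw [add_zero] at hx
        exact absurd hx (not_lt_of_ge h)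
      obtain ⟨d, hd, hxd⟩ := (lt_add_iff hb).1 hx
      calc x ≤ a + d := hxd
        _ ≤ a ♯ d := IH d hd
        _ < a ♯ b := nadd_lt_nadd_left hd a

end Ordinal

open Ordinal

lemma iterNadd_zero (α : Ordinal) : iterNadd α 0 = 0 :=
  Ordinal.limitRecOn_zero _ _ _

lemma iterNadd_succ (α β : Ordinal) :
    iterNadd α (Order.succ β) = iterNadd α β ♯ α :=
  Ordinal.limitRecOn_succ _ _ _ _

lemma iterNadd_limit (α : Ordinal) {l : Ordinal} (h : Order.IsSuccLimit l) :
    iterNadd α l = ⨆ γ : Set.Iio l, iterNadd α γ.1 :=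
  Ordinal.limitRecOn_limit _ _ _ _ h

/-- Decomposition below `ω^c * p`. -/
lemma exists_decomp {c p x : Ordinal} (hx : x < ω ^ c * p) :
    ∃ v w, v < p ∧ w < ω ^ c ∧ x = ω ^ c * v + w := by
  have hω : (ω ^ c : Ordinal) ≠ 0 := (opow_pos c omega0_pos).ne'
  exact ⟨x / ω ^ c, x % ω ^ c, (Ordinal.div_lt hω).2 hx, Ordinal.mod_lt x hω,
    (Ordinal.div_add_mod x (ω ^ c)).symm⟩

/-- `M`: for nats `p q`, `ω^c·p ♯ ω^c·q = ω^c·(p+q)`, assuming lemma `A` at level `c`. -/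
lemma nadd_opow_mul_nat (c : Ordinal)
    (hA : ∀ u y : Ordinal, y < ω ^ c → (ω ^ c * u) ♯ y = ω ^ c * u + y) :
    ∀ p q : ℕ, (ω ^ c * p) ♯ (ω ^ c * q) = ω ^ c * (p + q) := by
  have hωpos : (0:Ordinal) < ω ^ c := opow_pos c omega0_pos
  have key : ∀ n : ℕ, ∀ p q : ℕ, p + q = n →
      (ω ^ c * p) ♯ (ω ^ c * q) = ω ^ c * ((p:Ordinal) + q) := by
    intro n
    induction n using Nat.strong_induction_on with
    | _ n IH =>
      intro p q hpq
      apply le_antisymm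
      · rw [nadd_le_iff]
        constructor
        · intro x hx
          obtain ⟨v, w, hv, hw, rfl⟩ := exists_decomp hx
          obtain ⟨m, rfl⟩ := lt_omega0.1 (hv.trans (nat_lt_omega0 p))
          have hmp : m < p := by exact_mod_cast hv
          calc (ω ^ c * m + w) ♯ (ω ^ c * q)
              = ((ω ^ c * m) ♯ w) ♯ (ω ^ c * q) := by rw [hA _ _ hw]
            _ = ((ω ^ c * m) ♯ (ω ^ c * q)) ♯ w := nadd_right_comm _ _ _
            _ = ω ^ c * ((m:Ordinal) + q) ♯ w := by
                rw [IH (m + q) (by omega) m q rfl]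
            _ = ω ^ c * ((m:Ordinal) + q) + w := hA _ _ hw
            _ < ω ^ c * ((m:Ordinal) + q) + ω ^ c := add_lt_add_right hw _
            _ ≤ ω ^ c * ((p:Ordinal) + q) := by
                rw [← mul_succ]
                apply mul_le_mul_right
                have h1 : ((m:Ordinal) + q) + 1 ≤ (p:Ordinal) + q := by
                  have h2 : ((m + q + 1 : ℕ) : Ordinal) ≤ ((p + q : ℕ) : Ordinal) := by
                    exact_mod_cast (by omega : (m + q + 1 : ℕ) ≤ p + q)
                  push_cast at h2
                  exact h2
                rw [Order.succ_eq_add_one]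
                exact h1
        · intro x hx
          obtain ⟨v, w, hv, hw, rfl⟩ := exists_decomp hx
          obtain ⟨m, rfl⟩ := lt_omega0.1 (hv.trans (nat_lt_omega0 q))
          have hmq : m < q := by exact_mod_cast hv
          calc (ω ^ c * p) ♯ (ω ^ c * m + w)
              = (ω ^ c * p) ♯ ((ω ^ c * m) ♯ w) := by rw [hA _ _ hw]
            _ = ((ω ^ c * p) ♯ (ω ^ c * m)) ♯ w := (nadd_assoc _ _ _).symm
            _ = ω ^ c * ((p:Ordinal) + m) ♯ w := by
                rw [IH (p + m) (by omega) p m rfl]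
            _ = ω ^ c * ((p:Ordinal) + m) + w := hA _ _ hw
            _ < ω ^ c * ((p:Ordinal) + m) + ω ^ c := add_lt_add_right hw _
            _ ≤ ω ^ c * ((p:Ordinal) + q) := by
                rw [← mul_succ]
                apply mul_le_mul_right
                have h1 : ((p:Ordinal) + m) + 1 ≤ (p:Ordinal) + q := by
                  have h2 : ((p + m + 1 : ℕ) : Ordinal) ≤ ((p + q : ℕ) : Ordinal) := by
                    exact_mod_cast (by omega : (p + m + 1 : ℕ) ≤ p + q)
                  push_cast at h2
                  exact h2
                rw [Order.succ_eq_add_one]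
                exact h1
      · rw [mul_add]
        exact add_le_nadd _ _
  intro p q; exact key (p + q) p q rfl

/-- The key joint lemma: closure of `ω^c` under `♯`, and `♯` agrees with `+`
in `ω^c·u ♯ y` for `y < ω^c`. -/
lemma nadd_key : ∀ c : Ordinal,
    (∀ a b : Ordinal, a < ω ^ c → b < ω ^ c → a ♯ b < ω ^ c) ∧
    (∀ u y : Ordinal, y < ω ^ c → (ω ^ c * u) ♯ y = ω ^ c * u + y) := by
  intro c
  induction c using Ordinal.induction with
  | _ c IHc =>
    -- First: closure (B)
    have hB : ∀ a b : Ordinal, a < ω ^ c → b < ω ^ c → a ♯ b < ω ^ c := by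
      rcases Ordinal.zero_or_succ_or_isSuccLimit c with hc | ⟨d, hd⟩ | hc
      · subst hc
        intro a b ha hb
        rw [opow_zero] at *
        have ha0 : a = 0 := Ordinal.lt_one_iff_zero.1 ha
        have hb0 : b = 0 := Ordinal.lt_one_iff_zero.1 hb
        simp [ha0, hb0]
      · subst hd
        intro a b ha hb
        obtain ⟨hBd, hAd⟩ := IHc d (Order.lt_succ d)
        have hMd := nadd_opow_mul_nat d hAd
        have hsm : (ω : Ordinal) ^ Order.succ d = ω ^ d * ω := opow_succ ω d
        rw [hsm] at ha hb ⊢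
        obtain ⟨v, s, hv, hs, rfl⟩ := exists_decomp ha
        obtain ⟨u, t, hu, ht, rfl⟩ := exists_decomp hb
        obtain ⟨m, rfl⟩ := lt_omega0.1 hv
        obtain ⟨n, rfl⟩ := lt_omega0.1 hu
        have hst : s ♯ t < ω ^ d := hBd _ _ hs ht
        calc (ω ^ d * m + s) ♯ (ω ^ d * n + t)
            = ((ω ^ d * m) ♯ s) ♯ ((ω ^ d * n) ♯ t) := by
              rw [hAd _ _ hs, hAd _ _ ht]
          _ = ((ω ^ d * m) ♯ (ω ^ d * n)) ♯ (s ♯ t) := by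
              rw [nadd_assoc, nadd_assoc, ← nadd_assoc s,
                nadd_comm s (ω ^ d * (n:Ordinal)), nadd_assoc]
          _ = (ω ^ d * ((m:Ordinal) + n)) ♯ (s ♯ t) := by rw [hMd]
          _ = ω ^ d * ((m:Ordinal) + n) + (s ♯ t) := hAd _ _ hst
          _ < ω ^ d * ((m:Ordinal) + n) + ω ^ d := add_lt_add_right hst _
          _ = ω ^ d * Order.succ ((m:Ordinal) + n) := (mul_succ _ _).symm
          _ ≤ ω ^ d * ω := by
              apply mul_le_mul_right
              apply Order.succ_le_of_lt
              exact_mod_cast nat_lt_omega0 (m + n)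
      · -- c limit
        intro a b ha hb
        rcases eq_or_ne a 0 with rfl | ha0
        · simpa using hb
        rcases eq_or_ne b 0 with rfl | hb0
        · simpa using ha
        set d := Order.succ (max (log ω a) (log ω b)) with hddef
        have hdc : d < c := hc.succ_lt (max_lt
          ((lt_opow_iff_log_lt one_lt_omega0 ha0).1 ha)
          ((lt_opow_iff_log_lt one_lt_omega0 hb0).1 hb))
        have had : a < ω ^ d :=
          (lt_opow_succ_log_self one_lt_omega0 a).trans_le
            (opow_le_opow_right omega0_pos (Order.succ_le_succ (le_max_left _ _)))
        have hbd : b < ω ^ d :=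
          (lt_opow_succ_log_self one_lt_omega0 b).trans_le
            (opow_le_opow_right omega0_pos (Order.succ_le_succ (le_max_right _ _)))
        exact lt_of_lt_of_le ((IHc d hdc).1 a b had hbd)
          (opow_le_opow_right omega0_pos hdc.le)
    refine ⟨hB, ?_⟩
    -- Second: (A), by induction on u then y, using hB
    intro u
    induction u using Ordinal.induction with
    | _ u IHu =>
      intro y
      induction y using Ordinal.induction with
      | _ y IHy =>
        intro hy
        apply le_antisymm
        · rw [nadd_le_iff]
          constructor
          · intro x hx
            obtain ⟨v, w, hv, hw, rfl⟩ := exists_decomp hx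
            have hwy : w ♯ y < ω ^ c := hB _ _ hw hy
            calc (ω ^ c * v + w) ♯ y = ((ω ^ c * v) ♯ w) ♯ y := by
                  rw [IHu _ hv _ hw]
              _ = (ω ^ c * v) ♯ (w ♯ y) := nadd_assoc _ _ _
              _ = ω ^ c * v + (w ♯ y) := IHu _ hv _ hwy
              _ < ω ^ c * v + ω ^ c := add_lt_add_right hwy _
              _ = ω ^ c * (v + 1) := by rw [mul_add, mul_one]
              _ ≤ ω ^ c * u := by
                  apply mul_le_mul_right
                  have h5 := Order.succ_le_of_lt hv
                  rwa [Order.succ_eq_add_one] at h5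
              _ ≤ ω ^ c * u + y := le_self_add
          · intro y' hy'
            rw [IHy y' hy' (hy'.trans hy)]
            exact add_lt_add_right hy' _
        · exact add_le_nadd _ _

lemma iterNadd_zero_left (β : Ordinal) : iterNadd 0 β = 0 := by
  induction β using Ordinal.limitRecOn with
  | zero => exact iterNadd_zero 0
  | add_one β ih => rw [← Order.succ_eq_add_one, iterNadd_succ, ih, nadd_zero]
  | limit β hβ ih =>
    rw [iterNadd_limit 0 hβ]
    have : ∀ γ : Set.Iio β, iterNadd 0 γ.1 = 0 := fun γ => ih γ.1 γ.2
    exact le_antisymm (ciSup_le' fun γ => (this γ).le) zero_le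

lemma le_iterNadd (α β : Ordinal) : α * β ≤ iterNadd α β := by
  induction β using Ordinal.limitRecOn with
  | zero => simp [iterNadd_zero]
  | add_one β ih =>
    rw [← Order.succ_eq_add_one, iterNadd_succ, mul_succ]
    calc α * β + α ≤ iterNadd α β + α := add_le_add_left ih α
      _ ≤ iterNadd α β ♯ α := add_le_nadd _ _
  | limit β hβ ih =>
    rw [iterNadd_limit α hβ, mul_le_iff_of_isSuccLimit hβ]
    intro γ hγ
    calc α * γ ≤ iterNadd α γ := ih γ hγ
      _ ≤ ⨆ δ : Set.Iio β, iterNadd α δ.1 := by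
        have hs : Small.{u_1} (Set.range fun δ : Set.Iio β => iterNadd α δ.1) :=
          @small_range _ _ _ (Ordinal.small_Iio _)
        exact le_ciSup (@Ordinal.bddAbove_of_small _ hs) (⟨γ, hγ⟩ : Set.Iio β)

lemma mul_nat_lt_opow {α c : Ordinal} (hαc : α < ω ^ c) (m : ℕ) :
    α * m < ω ^ c := by
  induction m with
  | zero => simpa using opow_pos c omega0_pos
  | succ k ihk =>
    have h1 : α * ((k : Ordinal) + 1) = α * k + α := by rw [mul_add, mul_one]
    rw [Nat.cast_succ, h1]
    exact principal_add_omega0_opow c ihk hαc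

/-- If `λ` is a limit ordinal, then `⨁_{i<λ} α = α·λ` for every ordinal `α`. -/
theorem iterNadd_of_isLimit (α l : Ordinal) (hl : Order.IsSuccLimit l) :
    iterNadd α l = α * l := by
  induction l using Ordinal.induction with
  | _ l IHl =>
    rcases eq_or_ne α 0 with rfl | hα0
    · rw [iterNadd_zero_left, zero_mul]
    have hαpos : 0 < α := pos_iff_ne_zero.2 hα0
    set c := Order.succ (log ω α) with hcdef
    have hαc : α < ω ^ c := lt_opow_succ_log_self one_lt_omega0 α
    obtain ⟨hB, hA⟩ := nadd_key c
    -- α * ω = ω ^ c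
    have hαω : α * ω = ω ^ c := by
      apply le_antisymm
      · rw [mul_le_iff_of_isSuccLimit isSuccLimit_omega0]
        intro n hn
        obtain ⟨m, rfl⟩ := lt_omega0.1 hn
        exact (mul_nat_lt_opow hαc m).le
      · calc (ω:Ordinal) ^ c = ω ^ log ω α * ω := opow_succ ω (log ω α)
          _ ≤ α * ω := mul_le_mul_left (opow_log_le_self ω hα0) ω
    -- step: x < α * l → x ♯ α < α * l
    have step : ∀ x, x < α * l → x ♯ α < α * l := by
      intro x hx
      obtain ⟨μ, hμl, hxμ⟩ : ∃ μ < l, x < α * μ := by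
        by_contra h
        push_neg at h
        exact absurd hx (not_lt.2 ((mul_le_iff_of_isSuccLimit hl).2 fun μ hμ => h μ hμ))
      have hq : ω * (μ / ω) ≤ μ := by
        conv_rhs => rw [← Ordinal.div_add_mod μ ω]
        exact le_self_add
      obtain ⟨m, hm⟩ := lt_omega0.1 (Ordinal.mod_lt μ omega0_ne_zero)
      have hμdecomp : α * μ = ω ^ c * (μ / ω) + α * m := by
        conv_lhs => rw [← Ordinal.div_add_mod μ ω]
        rw [mul_add, ← mul_assoc, hαω, hm]
      have hαm : α * m < ω ^ c := mul_nat_lt_opow hαc m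
      have h2 : (α * m) ♯ α < ω ^ c := hB _ _ hαm hαc
      have hbound : (α * μ) ♯ α ≤ α * (ω * (μ / ω + 1)) := by
        calc (α * μ) ♯ α = ((ω ^ c * (μ / ω)) ♯ (α * m)) ♯ α := by
              rw [hμdecomp, hA _ _ hαm]
          _ = (ω ^ c * (μ / ω)) ♯ ((α * m) ♯ α) := nadd_assoc _ _ _
          _ = ω ^ c * (μ / ω) + ((α * m) ♯ α) := hA _ _ h2
          _ ≤ ω ^ c * (μ / ω) + ω ^ c := add_le_add_right h2.le _
          _ = ω ^ c * (μ / ω + 1) := by rw [mul_add, mul_one]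
          _ = α * (ω * (μ / ω + 1)) := by rw [← mul_assoc, hαω]
      have hωq : ω * (μ / ω + 1) ≤ l := by
        rw [mul_add, mul_one]
        have h4 : ω * (μ / ω) < l := lt_of_le_of_lt hq hμl
        have haux : ∀ k : ℕ, ω * (μ / ω) + k < l := by
          intro k
          induction k with
          | zero => simpa using h4
          | succ j ihj =>
            have heq : ω * (μ / ω) + ((j:Ordinal) + 1) = Order.succ (ω * (μ / ω) + j) := by
              rw [Order.succ_eq_add_one, add_assoc]
            rw [Nat.cast_succ, heq]
            exact hl.succ_lt ihj
        rw [add_le_iff_of_isSuccLimit isSuccLimit_omega0]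
        intro n hn
        obtain ⟨k, rfl⟩ := lt_omega0.1 hn
        exact (haux k).le
      calc x ♯ α < (α * μ) ♯ α := nadd_lt_nadd_right hxμ α
        _ ≤ α * (ω * (μ / ω + 1)) := hbound
        _ ≤ α * l := mul_le_mul_right hωq α
    -- every iterNadd α β < α * l for β < l
    have main : ∀ β, β < l → iterNadd α β < α * l := by
      intro β
      induction β using Ordinal.limitRecOn with
      | zero => intro _; rw [iterNadd_zero]; exact mul_pos hαpos hl.pos
      | add_one β ih =>
        intro hβ
        rw [← Order.succ_eq_add_one] at hβ ⊢
        rw [iterNadd_succ]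
        exact step _ (ih ((Order.lt_succ β).trans hβ))
      | limit β hβlim ih =>
        intro hβ
        rw [IHl β hβ hβlim]
        exact mul_lt_mul_of_pos_left hβ hαpos
    apply le_antisymm
    · rw [iterNadd_limit α hl]
      exact ciSup_le' fun γ => (main γ.1 γ.2).le
    · exact le_iterNadd α l
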